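/- Let 0 < γ < 1 and let G be a γ-extreme depth-robust DAG with N vertices. Then for every subset U of the vertices of G, the induced subgraph G[U] contains a directed path visiting at least |U| − γN vertices. -/
import Mathlib


/-- `G` is `(e,d)`-reducible (real-valued parameters): there is a set `S` of at most
`e` vertices such that every directed path avoiding `S` has fewer than `d` vertices;
`G` is `(e,d)`-depth robust iff it is not `(e,d)`-reducible. -/
def ReducibleR {V : Type*} (E : V → V → Prop) (e d : ℝ) : Prop :=
  ∃ S : Finset V, (S.card : ℝ) ≤ e ∧
    ∀ l : List V, l.Chain' E → (∀ v ∈ l, v ∉ S) → (l.length : ℝ) < d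

/-- Let `0 < γ < 1` and let `G` be a `γ`-extreme depth-robust DAG with
`N` vertices (i.e. `G` is `(e,d)`-depth robust for all `e, d > 0` with
`e + d ≤ (1-γ)·N`).  Then for every subset `U` of the vertices, the induced subgraph
`G[U]` contains a directed path visiting at least `|U| - γ·N` vertices. -/
theorem extreme_depth_robust_induced_path {V : Type*} [Fintype V]
    (E : V → V → Prop) (γ : ℝ) (hγ0 : 0 < γ) (hγ1 : γ < 1)
    (hdag : ∀ v : V, ¬ Relation.TransGen E v v)
    (hextreme : ∀ e d : ℝ, 0 < e → 0 < d →
      e + d ≤ (1 - γ) * (Fintype.card V : ℝ) → ¬ ReducibleR E e d) :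
    ∀ U : Finset V, ∃ l : List V, l.Chain' E ∧ (∀ v ∈ l, v ∈ U) ∧
      (U.card : ℝ) - γ * (Fintype.card V : ℝ) ≤ (l.length : ℝ) := by
  classical
  intro U
  set N : ℝ := (Fintype.card V : ℝ) with hN
  set t : ℝ := (U.card : ℝ) - γ * N with ht
  by_cases hle : t ≤ 0
  · exact ⟨[], List.isChain_nil, by simp, by simpa using hle⟩
  push_neg at hle
  set n : ℤ := ⌈t⌉ with hn
  have hn1 : (1 : ℤ) ≤ n := by
    have := Int.ceil_pos.mpr hle
    omega
  have htn : t ≤ (n : ℝ) := Int.le_ceil t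
  have hn1t : (n : ℝ) - 1 < t := by
    have := Int.ceil_lt_add_one t
    push_cast at this ⊢
    linarith
  set d : ℝ := ((n : ℝ) - 1 + t) / 2 with hd
  have hdlt : d < t := by rw [hd]; linarith
  have hdgt : (n : ℝ) - 1 < d := by rw [hd]; linarith
  have hd0 : 0 < d := by
    have : (0 : ℝ) ≤ (n : ℝ) - 1 := by
      have : (1 : ℝ) ≤ (n : ℝ) := by exact_mod_cast hn1
      linarith
    linarith
  have hcardle : (U.card : ℝ) ≤ N := by
    rw [hN]; exact_mod_cast U.card_le_univ
  set e : ℝ := (N - (U.card : ℝ)) + (t - d) with he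
  have he0 : 0 < e := by rw [he]; linarith
  have hsum : e + d ≤ (1 - γ) * N := by rw [he, ht]; ring_nf; linarith
  have hnred := hextreme e d he0 hd0 hsum
  rw [ReducibleR] at hnred
  push_neg at hnred
  obtain ⟨l, hchain, havoid, hlen⟩ := hnred Uᶜ (by
    rw [Finset.card_compl]
    rw [he]
    have : ((Fintype.card V - U.card : ℕ) : ℝ) = N - (U.card : ℝ) := by
      rw [hN]
      have : U.card ≤ Fintype.card V := U.card_le_univ
      push_cast [Nat.cast_sub this]
      ring
    rw [this]
    linarith)
  refine ⟨l, hchain, fun v hv => by simpa using havoid v hv, ?_⟩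
  have hlen' : d ≤ (l.length : ℝ) := hlen
  have hgt : (n : ℝ) - 1 < (l.length : ℝ) := lt_of_lt_of_le hdgt hlen'
  have hZ : n - 1 < (l.length : ℤ) := by exact_mod_cast hgt
  have hZ' : n ≤ (l.length : ℤ) := by omega
  have : (n : ℝ) ≤ (l.length : ℝ) := by exact_mod_cast hZ'
  linarith
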